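/- arXiv:2302.05344 — 4 statements merged into one kernel-verified Lean document; each statement's English description precedes it below -/
import Mathlib

section
/- A torsion-free virtually cyclic group is cyclic. -/
open Subgroup
open scoped commutatorElement

/-- A monoid is torsion-free if no nontrivial element has finite order
(the definition `Monoid.IsTorsionFree` of the older Mathlib, since removed). -/
def Monoid.IsTorsionFree (G : Type*) [Monoid G] : Prop :=
  ∀ g : G, g ≠ 1 → ¬IsOfFinOrder g

/-- Multiplying the entries of a commutator by central elements doesn't change it. -/
private lemma commutator_mul_central_aux {G : Type*} [Group G] (g h z w : G)
    (hz : ∀ x, z * x = x * z) (hw : ∀ x, w * x = x * w) :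
    ⁅g * z, h * w⁆ = ⁅g, h⁆ := by
  have hz1 : ∀ y, z * y * z⁻¹ = y := fun y => by rw [hz y, mul_inv_cancel_right]
  have hw1 : ∀ y, w * y * w⁻¹ = y := fun y => by rw [hw y, mul_inv_cancel_right]
  calc ⁅g * z, h * w⁆ = g * (z * (h * w) * z⁻¹) * g⁻¹ * (h * w)⁻¹ := by
        simp only [commutatorElement_def]; group
    _ = g * (h * w) * g⁻¹ * (h * w)⁻¹ := by rw [hz1]
    _ = g * h * (w * g⁻¹ * w⁻¹) * h⁻¹ := by group
    _ = ⁅g, h⁆ := by rw [hw1]; simp only [commutatorElement_def]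

/-- If the center has finite index, the commutator set is finite. -/
private lemma finite_commutatorSet_of_finiteIndex_center_aux {G : Type*} [Group G]
    [(Subgroup.center G).FiniteIndex] : Finite (commutatorSet G) := by
  set Z := Subgroup.center G
  haveI : Finite (G ⧸ Z) := Subgroup.finite_quotient_of_finiteIndex
  have hsub : commutatorSet G ⊆
      Set.range (fun p : (G ⧸ Z) × (G ⧸ Z) =>
        ⁅(p.1.out : G), (p.2.out : G)⁆) := by
    rintro - ⟨g, h, rfl⟩
    refine ⟨(QuotientGroup.mk g, QuotientGroup.mk h), ?_⟩
    obtain ⟨⟨z, hz⟩, hz'⟩ := QuotientGroup.mk_out_eq_mul Z g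
    obtain ⟨⟨w, hw⟩, hw'⟩ := QuotientGroup.mk_out_eq_mul Z h
    simp only at hz' hw' ⊢
    rw [hz', hw']
    exact commutator_mul_central_aux g h z w
      (fun x => (Subgroup.mem_center_iff.mp hz x).symm)
      (fun x => (Subgroup.mem_center_iff.mp hw x).symm)
  exact Set.Finite.subset (Set.finite_range _) hsub

/-- A torsion-free virtually cyclic group is cyclic. -/
theorem torsionFree_virtually_cyclic_isCyclic {G : Type*} [Group G]
    (htf : Monoid.IsTorsionFree G)
    (hvc : ∃ H : Subgroup G, H.FiniteIndex ∧ IsCyclic H) :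
    IsCyclic G := by
  classical
  by_cases hfin : Finite G
  · have : Subsingleton G := by
      refine ⟨fun a b => ?_⟩
      have h1 : ∀ x : G, x = 1 := fun x => by
        by_contra hx
        exact htf x hx (isOfFinOrder_of_finite x)
      rw [h1 a, h1 b]
    exact isCyclic_of_subsingleton
  rw [not_finite_iff_infinite] at hfin
  obtain ⟨H, hHfi, hHcyc⟩ := hvc
  haveI := hHfi
  set N := H.normalCore with hNdef
  haveI hNn : N.Normal := H.normalCore_normal
  haveI hNfi : N.FiniteIndex := H.finiteIndex_normalCore
  haveI : IsCyclic N := Subgroup.isCyclic_of_le H.normalCore_le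
  obtain ⟨⟨a, haN⟩, hgen⟩ := ‹IsCyclic N›
  -- every element of N is a power of a
  have hNpow : ∀ x ∈ N, ∃ k : ℤ, x = a ^ k := by
    intro x hx
    obtain ⟨k, hk⟩ := hgen ⟨x, hx⟩
    exact ⟨k, by simpa [← Subtype.coe_inj] using hk.symm⟩
  -- a is nontrivial, hence of infinite order
  have ha1 : a ≠ 1 := by
    rintro rfl
    have hNbot : N = ⊥ := by
      ext x
      simp only [Subgroup.mem_bot]
      constructor
      · intro hx
        obtain ⟨k, hk⟩ := hNpow x hx
        simp [hk]
      · rintro rfl; exact N.one_mem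
    have := hNfi.index_ne_zero
    rw [hNbot, Subgroup.index_bot, Nat.card_eq_zero_of_infinite] at this
    exact this rfl
  have hafin : ¬IsOfFinOrder a := htf a ha1
  have hzinj : Function.Injective fun n : ℤ => a ^ n :=
    injective_zpow_iff_not_isOfFinOrder.mpr hafin
  -- dichotomy: conjugates of a are a or a⁻¹
  have hdich : ∀ g : G, g * a * g⁻¹ = a ∨ g * a * g⁻¹ = a⁻¹ := by
    intro g
    obtain ⟨k, hk⟩ := hNpow _ (hNn.conj_mem a haN g)
    obtain ⟨m, hm⟩ := hNpow _ (hNn.conj_mem a haN g⁻¹)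
    have key : a ^ (1 : ℤ) = a ^ (m * k) := by
      have h2 : g⁻¹ * a ^ k * g = a := by rw [← hk]; group
      calc a ^ (1 : ℤ) = g⁻¹ * a ^ k * g := by rw [zpow_one, h2]
        _ = (g⁻¹ * a * (g⁻¹)⁻¹) ^ k := by rw [conj_zpow, inv_inv]
        _ = (a ^ m) ^ k := by rw [inv_inv] at hm ⊢; rw [← hm]
        _ = a ^ (m * k) := by rw [← zpow_mul]
    have hmk : m * k = 1 := (hzinj key).symm
    have := Int.isUnit_iff.mp (IsUnit.of_mul_eq_one (a := k) m (by linarith [mul_comm m k]))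
    rcases this with h1 | h1
    · left; rw [hk, h1, zpow_one]
    · right; rw [hk, h1]; simp
  -- the centralizer of a
  set C := Subgroup.centralizer ({a} : Set G) with hCdef
  have hmemC : ∀ x : G, x ∈ C ↔ a * x = x * a := by
    intro x
    rw [hCdef, Subgroup.mem_centralizer_iff]
    simp
  have hCpow : ∀ x ∈ C, ∀ k : ℤ, a ^ k * x = x * a ^ k := by
    intro x hx k
    exact Commute.zpow_left ((hmemC x).mp hx) k
  have hNC : N ≤ C := by
    intro x hx
    obtain ⟨k, rfl⟩ := hNpow x hx
    rw [hmemC]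
    exact Commute.zpow_right (Commute.refl a) k
  haveI hCfi : C.FiniteIndex := Subgroup.finiteIndex_of_le hNC
  haveI : (N.subgroupOf C).FiniteIndex := Subgroup.instFiniteIndex_subgroupOf N C
  have hNZ : N.subgroupOf C ≤ Subgroup.center C := by
    rintro ⟨x, hxC⟩ hx
    rw [Subgroup.mem_subgroupOf] at hx
    rw [Subgroup.mem_center_iff]
    rintro ⟨y, hyC⟩
    ext
    obtain ⟨k, rfl⟩ := hNpow x hx
    exact (hCpow y hyC k).symm
  haveI hZfi : (Subgroup.center C).FiniteIndex := Subgroup.finiteIndex_of_le hNZ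
  haveI hCS : Finite (commutatorSet C) := finite_commutatorSet_of_finiteIndex_center_aux
  -- torsion-freeness descends to C
  have htfC : ∀ (x : C) (n : ℕ), n ≠ 0 → x ^ n = 1 → x = 1 := by
    intro x n hn hx
    have hxG : (x : G) ^ n = 1 := by
      have := congrArg (Subtype.val : C → G) hx
      simpa using this
    by_contra hx1
    have hxG1 : (x : G) ≠ 1 := fun h => hx1 (Subtype.ext h)
    exact htf _ hxG1 (isOfFinOrder_iff_pow_eq_one.mpr ⟨n, Nat.pos_of_ne_zero hn, hxG⟩)
  -- Schur: the commutator subgroup of C is finite, hence trivial; so C is abelian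
  haveI : Finite (_root_.commutator C) := inferInstance
  have hbot : _root_.commutator C = ⊥ := by
    rw [eq_bot_iff]
    rintro x hx
    rw [Subgroup.mem_bot]
    obtain ⟨n, hn, hpow⟩ :=
      isOfFinOrder_iff_pow_eq_one.mp (isOfFinOrder_of_finite (⟨x, hx⟩ : _root_.commutator C))
    have : x ^ n = 1 := by
      have := congrArg (Subtype.val : _root_.commutator C → C) hpow
      simpa using this
    exact htfC x n (Nat.pos_iff_ne_zero.mp hn) this
  have hcomm : ∀ x y : C, x * y = y * x := by
    intro x y
    have hmem : ⁅x, y⁆ ∈ _root_.commutator C :=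
      Subgroup.commutator_mem_commutator (Subgroup.mem_top x) (Subgroup.mem_top y)
    rw [hbot, Subgroup.mem_bot] at hmem
    exact commutatorElement_eq_one_iff_commute.mp hmem
  -- the power map embeds C into the cyclic group N, so C is cyclic
  set n := (N.subgroupOf C).index with hn
  have hn0 : n ≠ 0 := Subgroup.FiniteIndex.index_ne_zero
  have hpowmem : ∀ x : C, ((x : G)) ^ n ∈ N := by
    intro x
    have := (N.subgroupOf C).pow_index_mem x
    rw [Subgroup.mem_subgroupOf] at this
    simpa using this
  let f : C →* N :=
    { toFun := fun x => ⟨(x : G) ^ n, hpowmem x⟩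
      map_one' := by ext; simp
      map_mul' := by
        intro x y
        ext
        have hc : Commute (x : G) (y : G) := by
          have := congrArg (Subtype.val : C → G) (hcomm x y)
          exact this
        simpa using hc.mul_pow n }
  have hfinj : Function.Injective f := by
    rw [injective_iff_map_eq_one]
    intro x hx
    have : (x : G) ^ n = 1 := by
      have := congrArg (Subtype.val : N → G) hx
      simpa [f] using this
    refine htfC x n hn0 ?_
    ext
    simpa using this
  haveI : IsCyclic f.range := Subgroup.isCyclic _
  haveI hCcyc : IsCyclic C :=
    isCyclic_of_surjective (MonoidHom.ofInjective hfinj).symm (MulEquiv.surjective _)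
  obtain ⟨c, hcgen⟩ := id hCcyc
  -- a is a nontrivial power of the generator c of C
  obtain ⟨m, hm⟩ := hcgen ⟨a, hNC haN⟩
  have hmG : (c : G) ^ m = a := by
    have := congrArg (Subtype.val : C → G) hm
    simpa using this
  have hc1 : (c : G) ≠ 1 := by
    rintro hc
    rw [hc, one_zpow] at hmG
    exact ha1 hmG.symm
  have hcinj : Function.Injective fun k : ℤ => (c : G) ^ k :=
    injective_zpow_iff_not_isOfFinOrder.mpr (htf _ hc1)
  have hm0 : m ≠ 0 := by
    rintro rfl
    rw [zpow_zero] at hmG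
    exact ha1 hmG.symm
  -- C is normal in G
  have hCnormal : ∀ g : G, ∀ x ∈ C, g * x * g⁻¹ ∈ C := by
    intro g x hx
    obtain ⟨e, he⟩ : ∃ e : ℤ, g⁻¹ * a * g = a ^ e := by
      rcases hdich g⁻¹ with h | h
      · exact ⟨1, by rw [zpow_one]; rw [inv_inv] at h; exact h⟩
      · exact ⟨-1, by rw [zpow_neg_one]; rw [inv_inv] at h; exact h⟩
    rw [hmemC]
    calc a * (g * x * g⁻¹) = g * (g⁻¹ * a * g) * x * g⁻¹ := by group
      _ = g * (a ^ e * x) * g⁻¹ := by rw [he]; group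
      _ = g * (x * a ^ e) * g⁻¹ := by rw [hCpow x hx e]
      _ = g * x * (g⁻¹ * a * g) * g⁻¹ := by rw [he]; group
      _ = g * x * g⁻¹ * a := by group
  -- every element of G centralizes a
  have hallC : ∀ g : G, g ∈ C := by
    intro g
    by_contra hg
    have hconj : g * a * g⁻¹ = a⁻¹ := by
      rcases hdich g with h | h
      · exact absurd ((hmemC g).mpr (mul_inv_eq_iff_eq_mul.mp h).symm) hg
      · exact h
    -- g inverts the generator c
    obtain ⟨k, hk⟩ := hcgen ⟨g * c * g⁻¹, hCnormal g c c.2⟩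
    have hkG : (c : G) ^ k = g * c * g⁻¹ := by
      have := congrArg (Subtype.val : C → G) hk
      simpa using this
    have hkm : k * m = -m := by
      apply hcinj
      show (c : G) ^ (k * m) = (c : G) ^ (-m)
      calc (c : G) ^ (k * m) = ((c : G) ^ k) ^ m := by rw [← zpow_mul, mul_comm]
        _ = (g * c * g⁻¹) ^ m := by rw [hkG]
        _ = g * (c : G) ^ m * g⁻¹ := by rw [conj_zpow]
        _ = g * a * g⁻¹ := by rw [hmG]
        _ = a⁻¹ := hconj
        _ = (c : G) ^ (-m) := by rw [zpow_neg, hmG]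
    have hkneg : k = -1 := by
      have : (k + 1) * m = 0 := by ring_nf; linarith [hkm]
      rcases mul_eq_zero.mp this with h | h
      · linarith
      · exact absurd h hm0
    -- g² centralizes a, hence is a power of c
    have h1 : g * a⁻¹ * g⁻¹ = a := by
      have := congrArg Inv.inv hconj
      simpa [mul_inv_rev, mul_assoc] using this
    have hg2 : g * g ∈ C := by
      rw [hmemC]
      have key : (g * g) * a * (g * g)⁻¹ = a := by
        calc (g * g) * a * (g * g)⁻¹ = g * (g * a * g⁻¹) * g⁻¹ := by group
          _ = g * a⁻¹ * g⁻¹ := by rw [hconj]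
          _ = a := h1
      exact (mul_inv_eq_iff_eq_mul.mp key).symm
    obtain ⟨j, hj⟩ := hcgen ⟨g * g, hg2⟩
    have hjG : (c : G) ^ j = g * g := by
      have := congrArg (Subtype.val : C → G) hj
      simpa using this
    have hj0 : j = 0 := by
      have hcomm2 : g * (g * g) * g⁻¹ = g * g := by group
      have : (c : G) ^ (-j) = (c : G) ^ j := by
        calc (c : G) ^ (-j) = ((c : G) ^ (-1 : ℤ)) ^ j := by
              rw [← zpow_mul]; ring_nf
          _ = ((c : G) ^ k) ^ j := by rw [hkneg]
          _ = (g * c * g⁻¹) ^ j := by rw [hkG]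
          _ = g * (c : G) ^ j * g⁻¹ := by rw [conj_zpow]
          _ = g * (g * g) * g⁻¹ := by rw [hjG]
          _ = g * g := hcomm2
          _ = (c : G) ^ j := hjG.symm
      have := hcinj this
      omega
    have hgsq : g ^ 2 = 1 := by rw [pow_two, ← hjG, hj0, zpow_zero]
    have hgne : g ≠ 1 := fun h => hg (h ▸ C.one_mem)
    exact htf g hgne (isOfFinOrder_iff_pow_eq_one.mpr ⟨2, by norm_num, hgsq⟩)
  have hCtop : C = ⊤ := Subgroup.eq_top_iff' C |>.mpr hallC
  haveI : IsCyclic (⊤ : Subgroup G) := hCtop ▸ hCcyc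
  exact isCyclic_of_surjective (Subgroup.topEquiv : (⊤ : Subgroup G) ≃* G)
    (MulEquiv.surjective _)
end

section
/- Let G be a residually finite group and A an abelian subgroup of G that equals its own centralizer (for every g ∈ G \ A there exists p ∈ A with [g,p] ≠ 1). Then A is separable in G. -/
/-- If `G` is residually finite and `A` is an abelian subgroup which is its own centralizer
(every `g ∉ A` fails to commute with some element of `A`), then `A` is separable in `G`:
for every `g ∉ A` there is a homomorphism to a finite group separating `g` from `A`. -/
theorem selfCentralizing_abelian_subgroup_separable {G : Type*} [Group G]
    (hRF : ∀ g : G, g ≠ 1 → ∃ (Q : Type) (_ : Group Q) (_ : Finite Q) (φ : G →* Q), φ g ≠ 1)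
    (A : Subgroup G) (hab : ∀ x ∈ A, ∀ y ∈ A, x * y = y * x)
    (hcent : ∀ g : G, g ∉ A → ∃ p ∈ A, g * p * g⁻¹ * p⁻¹ ≠ 1) :
    ∀ g : G, g ∉ A → ∃ (Q : Type) (_ : Group Q) (_ : Finite Q) (h : G →* Q),
      h g ∉ h '' (A : Set G) := by
  intro g hg
  obtain ⟨p, hp, hc⟩ := hcent g hg
  obtain ⟨Q, _, _, φ, hφ⟩ := hRF _ hc
  refine ⟨Q, ‹_›, ‹_›, φ, ?_⟩
  rintro ⟨a, ha, heq⟩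
  apply hφ
  have comm : a * p = p * a := hab a ha p hp
  have : φ g * φ p = φ p * φ g := by
    rw [← heq, ← map_mul, ← map_mul, comm]
  simp only [map_mul, map_inv]
  rw [this]
  group
end

section
/- Let G be a group, P ≤ G a subgroup, and P' ≤ P a finite-index subgroup of P. Suppose P' is separable in G. Then there exists a finite-index subgroup G₁ ≤ G such that G₁ ∩ P = P'. -/
/-- If `P' ≤ P ≤ G` with `P'` of finite index in `P` and `P'` separable in `G`
(in the sense that every `g ∉ P'` is excluded by some finite-index subgroup containing `P'`),
then there is a finite-index subgroup `G₁` of `G` with `G₁ ∩ P = P'`. -/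
theorem exists_finiteIndex_subgroup_inter_eq {G : Type*} [Group G]
    (P P' : Subgroup G) (hle : P' ≤ P) (hfi : P'.relIndex P ≠ 0)
    (hsep : ∀ g : G, g ∉ P' → ∃ K : Subgroup G, K.FiniteIndex ∧ P' ≤ K ∧ g ∉ K) :
    ∃ G₁ : Subgroup G, G₁.FiniteIndex ∧ G₁ ⊓ P = P' := by
  set H : Subgroup P := P'.subgroupOf P with hH
  have hHfi : H.FiniteIndex := ⟨hfi⟩
  have : Finite (P ⧸ H) := H.finite_quotient_of_finiteIndex
  classical
  set f : P ⧸ H → Subgroup G := fun q =>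
    if h : (q.out : G) ∈ P' then ⊤ else (hsep _ h).choose with hf
  have hfFI : ∀ q, (f q).FiniteIndex := by
    intro q
    simp only [hf]
    split
    · infer_instance
    · exact (hsep _ (by assumption)).choose_spec.1
  have hfle : ∀ q, P' ≤ f q := by
    intro q
    simp only [hf]
    split
    · exact le_top
    · exact (hsep _ (by assumption)).choose_spec.2.1
  refine ⟨⨅ q, f q, ?_, ?_⟩
  · exact Subgroup.finiteIndex_iInf hfFI
  · apply le_antisymm
    · rintro x ⟨hx1, hx2⟩
      by_contra hx'
      set xp : P := ⟨x, hx2⟩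
      set q : P ⧸ H := QuotientGroup.mk xp with hq
      have hrel : q.out⁻¹ * xp ∈ H := by
        rw [← QuotientGroup.eq, hq, QuotientGroup.out_eq']
      have hrelP' : ((q.out⁻¹ * xp : P) : G) ∈ P' := hrel
      have hout : (q.out : G) ∉ P' := by
        intro hmem
        apply hx'
        have : ((q.out : P) : G)⁻¹ * x ∈ P' := hrelP'
        have := P'.mul_mem hmem this
        simpa using this
      have hK := (hsep _ hout).choose_spec
      have hxK : x ∈ f q := Subgroup.mem_iInf.mp hx1 q
      have hfq : f q = (hsep _ hout).choose := by simp [hf, hout]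
      apply hK.2.2
      have h1 : ((q.out⁻¹ * xp : P) : G) ∈ (hsep _ hout).choose := hK.2.1 hrelP'
      have h2 : x ∈ (hsep _ hout).choose := hfq ▸ hxK
      have h3 := Subgroup.mul_mem _ h2 (Subgroup.inv_mem _ h1)
      have heq : x * ((q.out⁻¹ * xp : P) : G)⁻¹ = (q.out : G) := by
        have hxp : ((xp : P) : G) = x := rfl
        push_cast
        rw [hxp]
        group
      rwa [heq] at h3
    · exact le_inf (fun x hx => Subgroup.mem_iInf.mpr fun q => hfle q hx) hle
end

section
/- Suppose G is residually finite and LERF, and P₁, …, P_n are subgroups of G each containing a finite-index abelian subgroup P_i' that is separable in G. Then G has a finite-index normal subgroup G'' such that G'' ∩ gP_ig⁻¹ is abelian for every i and every g ∈ G. -/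
/-- A subgroup `H` of a group `K` is separable if it is an intersection of finite-index
subgroups of `K`. -/
def IsSeparableSubgroup {K : Type*} [Group K] (H : Subgroup K) : Prop :=
  ∃ S : Set (Subgroup K), (∀ J ∈ S, J.FiniteIndex) ∧ H = sInf S

/-- Key step: a separable subgroup of finite relative index in `P` can be cut out by a
finite-index subgroup of the ambient group. -/
lemma exists_finiteIndex_inf_le {G : Type*} [Group G] (P P' : Subgroup G)
    (hle : P' ≤ P) (hfi : P'.relIndex P ≠ 0) (hsep : IsSeparableSubgroup P') :
    ∃ H : Subgroup G, H.FiniteIndex ∧ H ⊓ P ≤ P' := by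
  classical
  obtain ⟨S, hSfi, hSinf⟩ := hsep
  have hPle : ∀ J ∈ S, P' ≤ J := fun J hJ => hSinf ▸ sInf_le hJ
  set Q := P ⧸ P'.subgroupOf P with hQ
  haveI : (P'.subgroupOf P).FiniteIndex := ⟨hfi⟩
  haveI : Finite Q := inferInstanceAs (Finite (P ⧸ P'.subgroupOf P))
  -- For each coset, choose a finite-index subgroup excluding its representative (if possible)
  have hchoice : ∀ q : Q, ∃ J : Subgroup G, J.FiniteIndex ∧ P' ≤ J ∧
      ((q.out : G) ∉ P' → (q.out : G) ∉ J) := by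
    intro q
    by_cases h : (q.out : G) ∈ P'
    · exact ⟨⊤, Subgroup.instFiniteIndexTop, le_top, fun h' => absurd h h'⟩
    · have : (q.out : G) ∉ sInf S := hSinf ▸ h
      rw [Subgroup.mem_sInf] at this
      push_neg at this
      obtain ⟨J, hJS, hJ⟩ := this
      exact ⟨J, hSfi J hJS, hPle J hJS, fun _ => hJ⟩
  choose f hf1 hfle hf2 using hchoice
  refine ⟨⨅ q : Q, f q, Subgroup.finiteIndex_iInf hf1, ?_⟩
  rintro x ⟨hxH, hxP⟩
  set p : P := ⟨x, hxP⟩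
  set q : Q := QuotientGroup.mk p with hq
  have hout : (q.out)⁻¹ * p ∈ P'.subgroupOf P := by
    rw [← QuotientGroup.eq]
    simp [hq]
  have houtP' : (((q.out)⁻¹ * p : P) : G) ∈ P' := Subgroup.mem_subgroupOf.mp hout
  by_cases h : (q.out : G) ∈ P'
  · have : (x : G) = (q.out : G) * ((q.out)⁻¹ * p : P) := by
      push_cast; group; rfl
    rw [this]
    exact mul_mem h houtP'
  · exfalso
    have hxJ : x ∈ f q := by
      have := Subgroup.mem_iInf.mp hxH q
      exact this
    have hinv : (((q.out)⁻¹ * p : P) : G)⁻¹ ∈ P' := inv_mem houtP'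
    have hinvJ : (((q.out)⁻¹ * p : P) : G)⁻¹ ∈ f q := hfle q hinv
    have : (q.out : G) ∈ f q := by
      have heq : (q.out : G) = x * (((q.out)⁻¹ * p : P) : G)⁻¹ := by
        push_cast; rw [show (p : G) = x from rfl]; group
      rw [heq]
      exact mul_mem hxJ hinvJ
    exact hf2 q h this

/-- If `G` is residually finite and LERF, and `P₁, …, Pₙ` are subgroups each containing a
finite-index abelian subgroup `Pᵢ'` separable in `G`, then `G` has a finite-index normal
subgroup `G''` meeting every conjugate of every `Pᵢ` in an abelian subgroup. -/
theorem exists_normal_finiteIndex_meeting_peripherals_abelian {G : Type*} [Group G]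
    (hRF : ∀ g : G, g ≠ 1 → ∃ N : Subgroup G, N.Normal ∧ N.FiniteIndex ∧ g ∉ N)
    (hLERF : ∀ H : Subgroup G, H.FG → IsSeparableSubgroup H)
    (n : ℕ) (P P' : Fin n → Subgroup G)
    (hle : ∀ i, P' i ≤ P i)
    (hfi : ∀ i, (P' i).relIndex (P i) ≠ 0)
    (hab : ∀ i, ∀ x ∈ P' i, ∀ y ∈ P' i, x * y = y * x)
    (hsep : ∀ i, IsSeparableSubgroup (P' i)) :
    ∃ G'' : Subgroup G, G''.Normal ∧ G''.FiniteIndex ∧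
      ∀ i, ∀ g : G,
        ∀ x ∈ G'' ⊓ (P i).map (MulAut.conj g).toMonoidHom,
          ∀ y ∈ G'' ⊓ (P i).map (MulAut.conj g).toMonoidHom, x * y = y * x := by
  classical
  choose H hHfi hHinf using fun i => exists_finiteIndex_inf_le (P i) (P' i) (hle i) (hfi i) (hsep i)
  haveI : ∀ i, (H i).FiniteIndex := hHfi
  set G' : Subgroup G := ⨅ i, H i with hG'
  haveI : G'.FiniteIndex := Subgroup.finiteIndex_iInf hHfi
  refine ⟨G'.normalCore, Subgroup.normalCore_normal G', Subgroup.finiteIndex_normalCore G', ?_⟩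
  intro i g x hx y hy
  obtain ⟨hxN, hxP⟩ := hx
  obtain ⟨hyN, hyP⟩ := hy
  -- conjugate back
  have key : ∀ z : G, z ∈ G'.normalCore → z ∈ (P i).map (MulAut.conj g).toMonoidHom →
      g⁻¹ * z * g ∈ P' i := by
    intro z hzN hzP
    obtain ⟨p, hp, rfl⟩ := hzP
    have h1 : g⁻¹ * ((MulAut.conj g).toMonoidHom p) * g = p := by
      simp [MulAut.conj_apply]; group
    rw [h1]
    have hzN' : g⁻¹ * ((MulAut.conj g).toMonoidHom p) * g ∈ G'.normalCore := by
      have := (Subgroup.normalCore_normal G').conj_mem _ hzN g⁻¹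
      simpa [mul_assoc] using this
    rw [h1] at hzN'
    have hG'p : p ∈ G' := G'.normalCore_le hzN'
    have : p ∈ H i := (Subgroup.mem_iInf.mp hG'p) i
    exact hHinf i ⟨this, hp⟩
  have hx' := key x hxN hxP
  have hy' := key y hyN hyP
  have := hab i _ hx' _ hy'
  have h2 : g⁻¹ * (x * y) * g = g⁻¹ * (y * x) * g := by
    calc g⁻¹ * (x * y) * g = (g⁻¹ * x * g) * (g⁻¹ * y * g) := by group
    _ = (g⁻¹ * y * g) * (g⁻¹ * x * g) := this
    _ = g⁻¹ * (y * x) * g := by group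
  have := mul_left_cancel (mul_right_cancel h2)
  exact this
end
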